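/- arXiv:2407.16407 — 4 statements merged into one kernel-verified Lean document; each statement's English description precedes it below -/
import Mathlib

section
/- Let (X, 𝔄, μ) be a measure space, H a real Hilbert space, ι : H → L²(μ) an injective continuous linear map with dense range, and k : X → H a family of feature maps with the reproducing property that, for every ψ ∈ H, the function x ↦ ⟪ψ, k(x)⟫_H is a representative of ιψ ∈ L²(μ). Let g : X → ℝ be a square-integrable measurable function such that the H-valued map x ↦ g(x) • k(x) is Bochner integrable with respect to μ. If ∫_X ⟪k(x), k(y)⟫_H g(y) dμ(y) = 0 for every x ∈ X, then g = 0 μ-almost everywhere. -/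
open MeasureTheory RealInnerProductSpace

/-- **Proposition 3**: if an RKHS `H` with feature maps `k x` embeds continuously,
injectively and densely into `L²(μ)`, then a square-integrable function `g` whose
integral against every feature map vanishes must vanish almost everywhere; i.e. the
canonical feature maps suffice as test functions. -/
theorem feature_maps_suffice_as_test_functions
    {X : Type*} [MeasurableSpace X] (μ : Measure X)
    {H : Type*} [NormedAddCommGroup H] [InnerProductSpace ℝ H]
    (ι : H →L[ℝ] Lp ℝ 2 μ) (hι_inj : Function.Injective ι) (hι_dense : DenseRange ι)
    (k : X → H)
    (hrepr : ∀ ψ : H, (ι ψ : X → ℝ) =ᵐ[μ] fun x => ⟪ψ, k x⟫)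
    (g : X → ℝ) (hg_meas : Measurable g) (hg_sq : MemLp g 2 μ)
    (hg_int : Integrable (fun x => g x • k x) μ)
    (h : ∀ x : X, ∫ y, ⟪k x, k y⟫ * g y ∂μ = 0) :
    g =ᵐ[μ] 0 := by
  classical
  -- work in the completion of `H`, where Bochner integrals exist
  let H' := UniformSpace.Completion H
  let j : H →L[ℝ] H' := UniformSpace.Completion.toComplL
  have hj_int : Integrable (fun y => ((g y • k y : H) : H')) μ := by
    exact j.integrable_comp hg_int
  set w : H' := ∫ y, ((g y • k y : H) : H') ∂μ with hw
  have hker : ∀ ψ : H, ⟪(ψ : H'), w⟫ = ∫ y, g y * ⟪ψ, k y⟫ ∂μ := by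
    intro ψ
    rw [hw, ← integral_inner hj_int]
    congr 1
    funext y
    rw [UniformSpace.Completion.inner_coe, real_inner_smul_right]
  -- inner products of `w` against feature maps vanish
  have hkw : ∀ x : X, ⟪((k x : H) : H'), w⟫ = 0 := by
    intro x
    rw [hker (k x)]
    simpa [mul_comm] using h x
  -- hence `w = 0`
  have hww : ⟪w, w⟫ = (0 : ℝ) := by
    rw [hw, ← integral_inner hj_int]
    have : ∀ y, ⟪w, ((g y • k y : H) : H')⟫ = g y * ⟪((k y : H) : H'), w⟫ := by
      intro y
      rw [UniformSpace.Completion.coe_smul, real_inner_smul_right, real_inner_comm]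
    simp only [← hw, this, hkw, mul_zero, integral_zero]
  have hw0 : w = 0 := by rwa [inner_self_eq_zero] at hww
  have hpsi : ∀ ψ : H, ∫ y, g y * ⟪ψ, k y⟫ ∂μ = 0 := by
    intro ψ
    rw [← hker ψ, hw0, inner_zero_right]
  -- move to L²
  set G : Lp ℝ 2 μ := hg_sq.toLp g with hG
  have hιG : ∀ ψ : H, ⟪ι ψ, G⟫ = 0 := by
    intro ψ
    rw [L2.inner_def]
    have h1 : (fun a => ⟪(ι ψ : X → ℝ) a, (G : X → ℝ) a⟫) =ᵐ[μ]
        fun a => g a * ⟪ψ, k a⟫ := by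
      filter_upwards [hrepr ψ, hg_sq.coeFn_toLp] with a ha hb
      simp [RCLike.inner_apply, ha, hG, hb, mul_comm]
    rw [integral_congr_ae h1]
    exact hpsi ψ
  -- dense range: `G` is orthogonal to everything
  have hall : ∀ v : Lp ℝ 2 μ, ⟪v, G⟫ = 0 := by
    have hcont : Continuous fun v : Lp ℝ 2 μ => ⟪v, G⟫ :=
      continuous_id.inner continuous_const
    have := Continuous.ext_on hι_dense hcont continuous_const
      (by rintro _ ⟨ψ, rfl⟩; exact hιG ψ)
    intro v; exact congrFun this v
  have hG0 : G = 0 := by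
    have := hall G
    rwa [inner_self_eq_zero] at this
  calc g =ᵐ[μ] (G : X → ℝ) := (hg_sq.coeFn_toLp).symm
    _ =ᵐ[μ] 0 := by rw [hG0]; exact Lp.coeFn_zero _ _ _
end

section
/- Let f : ℝ → ℝ be three times continuously differentiable with |f'''(t)| ≤ M for all t ∈ ℝ, where M ≥ 0. Then for every z ∈ ℝ and a ∈ ℝ, the function w ↦ f(z + a w) is integrable with respect to the standard Gaussian measure γ = N(0,1) on ℝ, and | ∫_ℝ f(z + a w) dγ(w) − f(z) − (a²/2) f''(z) | ≤ (M |a|³ / 6) · ∫_ℝ |w|³ dγ(w) = (√2 · M |a|³) / (3 √π). -/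
open MeasureTheory ProbabilityTheory Real

namespace GaussSmoothAux

open Filter Set
open scoped NNReal ENNReal

/-- FTC-based bound: if `|u'| ≤ C|t|^k` and `u 0 = 0` then `|u h| ≤ C|h|^(k+1)/(k+1)`. -/
lemma key_bound {u u' : ℝ → ℝ} {C : ℝ} (k : ℕ)
    (hu : ∀ t, HasDerivAt u (u' t) t) (hu' : Continuous u')
    (h0 : u 0 = 0) (hb : ∀ t, |u' t| ≤ C * |t| ^ k) (h : ℝ) :
    |u h| ≤ C * |h| ^ (k + 1) / (k + 1) := by
  have hftc : u h = ∫ t in (0:ℝ)..h, u' t := by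
    rw [intervalIntegral.integral_eq_sub_of_hasDerivAt (fun t _ => hu t)
      (hu'.intervalIntegrable 0 h), h0, sub_zero]
  rw [hftc]
  have habs : |∫ t in (0:ℝ)..h, u' t| ≤ abs (∫ t in (0:ℝ)..h, |u' t|) := by
    simpa [Real.norm_eq_abs] using
      intervalIntegral.norm_integral_le_abs_integral_norm (f := u') (a := 0) (b := h)
        (μ := volume)
  refine habs.trans ?_
  rcases le_or_gt 0 h with hh | hh
  · have h1 : (∫ t in (0:ℝ)..h, |u' t|) ≤ ∫ t in (0:ℝ)..h, C * t ^ k := by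
      refine intervalIntegral.integral_mono_on hh (hu'.abs.intervalIntegrable _ _)
        ((continuous_const.mul (continuous_pow k)).intervalIntegrable _ _) ?_
      intro t ht
      calc |u' t| ≤ C * |t| ^ k := hb t
        _ = C * t ^ k := by rw [abs_of_nonneg ht.1]
    have h2 : (∫ t in (0:ℝ)..h, C * t ^ k) = C * h ^ (k + 1) / (k + 1) := by
      rw [intervalIntegral.integral_const_mul, integral_pow]
      simp [mul_div_assoc]
    have h3 : (0:ℝ) ≤ ∫ t in (0:ℝ)..h, |u' t| :=
      intervalIntegral.integral_nonneg hh (fun t _ => abs_nonneg _)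
    rw [abs_of_nonneg h3, abs_of_nonneg hh]
    rw [h2] at h1
    exact h1
  · have hsym : abs (∫ t in (0:ℝ)..h, |u' t|) = abs (∫ t in h..(0:ℝ), |u' t|) := by
      rw [intervalIntegral.integral_symm, abs_neg]
    rw [hsym]
    have h1 : (∫ t in h..(0:ℝ), |u' t|) ≤ ∫ t in h..(0:ℝ), C * (-t) ^ k := by
      refine intervalIntegral.integral_mono_on hh.le (hu'.abs.intervalIntegrable _ _)
        ((continuous_const.mul (continuous_neg.pow k)).intervalIntegrable _ _) ?_
      intro t ht
      calc |u' t| ≤ C * |t| ^ k := hb t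
        _ = C * (-t) ^ k := by rw [abs_of_nonpos ht.2]
    have h2 : (∫ t in h..(0:ℝ), C * (-t) ^ k) = C * (-h) ^ (k + 1) / (k + 1) := by
      have := intervalIntegral.integral_comp_neg (a := h) (b := (0:ℝ))
        (fun t => C * t ^ k)
      rw [this, intervalIntegral.integral_const_mul, integral_pow]
      simp [mul_div_assoc]
    have h3 : (0:ℝ) ≤ ∫ t in h..(0:ℝ), |u' t| :=
      intervalIntegral.integral_nonneg hh.le (fun t _ => abs_nonneg _)
    rw [abs_of_nonneg h3, abs_of_neg hh]
    rw [h2] at h1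
    exact h1

/-- Third-order Taylor bound with Lagrange-type constant. -/
lemma taylor3 {f : ℝ → ℝ} (hf : ContDiff ℝ 3 f) {M : ℝ}
    (hf3 : ∀ t, |iteratedDeriv 3 f t| ≤ M) (z h : ℝ) :
    |f (z + h) - f z - deriv f z * h - iteratedDeriv 2 f z * h ^ 2 / 2|
      ≤ M * |h| ^ 3 / 6 := by
  have hM : 0 ≤ M := (abs_nonneg _).trans (hf3 0)
  -- derivative facts
  have hfd : Differentiable ℝ f := hf.differentiable (by norm_num)
  have hd1 : ∀ t, HasDerivAt f (deriv f t) t := fun t => (hfd t).hasDerivAt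
  have hder1 : Differentiable ℝ (deriv f) := by
    have := hf.differentiable_iteratedDeriv 1 (by norm_num)
    simpa [iteratedDeriv_one] using this
  have hder2 : Differentiable ℝ (iteratedDeriv 2 f) :=
    hf.differentiable_iteratedDeriv 2 (by norm_num)
  have hd2 : ∀ t, HasDerivAt (deriv f) (iteratedDeriv 2 f t) t := by
    intro t
    have h1 : iteratedDeriv 2 f t = deriv (deriv f) t := by
      rw [iteratedDeriv_succ, iteratedDeriv_one]
    rw [h1]
    exact (hder1 t).hasDerivAt
  have hd3 : ∀ t, HasDerivAt (iteratedDeriv 2 f) (iteratedDeriv 3 f t) t := by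
    intro t
    have h1 : iteratedDeriv 3 f t = deriv (iteratedDeriv 2 f) t := by
      rw [iteratedDeriv_succ]
    rw [h1]
    exact (hder2 t).hasDerivAt
  have hcont2 : Continuous (iteratedDeriv 2 f) := hf.continuous_iteratedDeriv 2 (by norm_num)
  have hcont3 : Continuous (iteratedDeriv 3 f) := hf.continuous_iteratedDeriv 3 (by norm_num)
  have hcont1 : Continuous (deriv f) := by
    have := hf.continuous_iteratedDeriv 1 (by norm_num)
    simpa [iteratedDeriv_one] using this
  have haff : ∀ t : ℝ, HasDerivAt (fun s : ℝ => z + s) 1 t := fun t =>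
    (hasDerivAt_id t).const_add z
  -- Stage 1
  set u₀ : ℝ → ℝ := fun t => iteratedDeriv 2 f (z + t) - iteratedDeriv 2 f z with hu₀def
  have hu₀d : ∀ t, HasDerivAt u₀ (iteratedDeriv 3 f (z + t)) t := by
    intro t
    have := ((hd3 (z + t)).comp t (haff t)).sub_const (iteratedDeriv 2 f z)
    simpa [hu₀def] using this
  have hu₀ : ∀ t, |u₀ t| ≤ M * |t| := by
    intro t
    have := key_bound 0 hu₀d (hcont3.comp (continuous_const.add continuous_id))
      (by simp [hu₀def]) (fun s => by simpa using hf3 (z + s)) t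
    simpa using this
  have hu₀cont : Continuous u₀ :=
    (hcont2.comp (continuous_const.add continuous_id)).sub continuous_const
  -- Stage 2
  set u₁ : ℝ → ℝ := fun t => deriv f (z + t) - deriv f z - iteratedDeriv 2 f z * t with hu₁def
  have hu₁d : ∀ t, HasDerivAt u₁ (u₀ t) t := by
    intro t
    have h1 := ((hd2 (z + t)).comp t (haff t)).sub_const (deriv f z)
    have h2 : HasDerivAt (fun s : ℝ => iteratedDeriv 2 f z * s) (iteratedDeriv 2 f z) t := by
      simpa using (hasDerivAt_id t).const_mul (iteratedDeriv 2 f z)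
    have := h1.sub h2
    exact this.congr_deriv (by simp [hu₀def])
  have hu₁ : ∀ t, |u₁ t| ≤ M / 2 * |t| ^ 2 := by
    intro t
    have := key_bound 1 hu₁d hu₀cont (by simp [hu₁def])
      (fun s => by simpa using hu₀ s) t
    have h2 : |u₁ t| ≤ M * |t| ^ 2 / 2 := by exact_mod_cast this
    linarith
  have hu₁cont : Continuous u₁ :=
    ((hcont1.comp (continuous_const.add continuous_id)).sub continuous_const).sub
      (continuous_const.mul continuous_id)
  -- Stage 3
  set u₂ : ℝ → ℝ := fun t =>
    f (z + t) - f z - deriv f z * t - iteratedDeriv 2 f z * t ^ 2 / 2 with hu₂def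
  have hu₂d : ∀ t, HasDerivAt u₂ (u₁ t) t := by
    intro t
    have h1 := ((hd1 (z + t)).comp t (haff t)).sub_const (f z)
    have h2 : HasDerivAt (fun s : ℝ => deriv f z * s) (deriv f z) t := by
      simpa using (hasDerivAt_id t).const_mul (deriv f z)
    have h3 : HasDerivAt (fun s : ℝ => iteratedDeriv 2 f z * s ^ 2 / 2)
        (iteratedDeriv 2 f z * t) t := by
      have := ((hasDerivAt_pow 2 t).const_mul (iteratedDeriv 2 f z)).div_const 2
      exact this.congr_deriv (by ring)
    have := (h1.sub h2).sub h3
    exact this.congr_deriv (by simp [hu₁def])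
  have hkey := key_bound 2 hu₂d hu₁cont (by simp [hu₂def])
    (fun s => by simpa using hu₁ s) h
  have h2 : |u₂ h| ≤ M / 2 * |h| ^ 3 / 3 := by exact_mod_cast hkey
  linarith

/-! Gaussian integrals over `volume`. -/

lemma intW (n : ℕ) : Integrable (fun x : ℝ => x ^ n * Real.exp (-x ^ 2 / 2)) := by
  have h := integrable_rpow_mul_exp_neg_mul_sq (b := (2:ℝ)⁻¹) (by norm_num) (s := (n : ℝ))
    (by exact_mod_cast neg_one_lt_zero.trans_le (Nat.cast_nonneg n))
  have heq : (fun x : ℝ => x ^ (n : ℝ) * Real.exp (-(2:ℝ)⁻¹ * x ^ 2))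
      = fun x : ℝ => x ^ n * Real.exp (-x ^ 2 / 2) := by
    funext x
    rw [Real.rpow_natCast]
    ring_nf
  rw [heq] at h
  exact h

lemma intAbsW (n : ℕ) : Integrable (fun x : ℝ => |x| ^ n * Real.exp (-x ^ 2 / 2)) := by
  have h := (intW n).abs
  have heq : ∀ x : ℝ, |x ^ n * Real.exp (-x ^ 2 / 2)| = |x| ^ n * Real.exp (-x ^ 2 / 2) := by
    intro x
    rw [abs_mul, abs_pow, abs_of_nonneg (Real.exp_pos _).le]
  simpa [heq] using h

lemma tendsto_top (k : ℕ) :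
    Tendsto (fun x : ℝ => x ^ k * Real.exp (-x ^ 2 / 2)) atTop (nhds 0) := by
  have h1 := tendsto_pow_mul_exp_neg_atTop_nhds_zero k
  refine squeeze_zero' ?_ ?_ h1
  · filter_upwards [eventually_ge_atTop (0:ℝ)] with x hx
    positivity
  · filter_upwards [eventually_ge_atTop (2:ℝ)] with x hx
    have hx0 : (0:ℝ) ≤ x := by linarith
    have : -x ^ 2 / 2 ≤ -x := by nlinarith
    exact mul_le_mul_of_nonneg_left (Real.exp_le_exp.mpr this) (by positivity)

lemma tendsto_bot (k : ℕ) :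
    Tendsto (fun x : ℝ => x ^ k * Real.exp (-x ^ 2 / 2)) atBot (nhds 0) := by
  have h := (tendsto_top k).comp tendsto_neg_atBot_atTop
  have h2 := h.const_mul ((-1:ℝ) ^ k)
  rw [mul_zero] at h2
  refine h2.congr (fun x => ?_)
  simp only [Function.comp]
  rw [neg_pow x k, neg_sq]
  ring_nf
  rw [mul_comm k 2, pow_mul]
  norm_num

lemma V0 : ∫ x : ℝ, Real.exp (-x ^ 2 / 2) = Real.sqrt (2 * π) := by
  have h := integral_gaussian (2⁻¹ : ℝ)
  have hπ : π / (2⁻¹ : ℝ) = 2 * π := by ring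
  rw [hπ] at h
  rw [← h]
  simp only [show ∀ x : ℝ, -(2⁻¹:ℝ) * x ^ 2 = -x ^ 2 / 2 from fun x => by ring]

lemma hasDerivAt_E (x : ℝ) :
    HasDerivAt (fun x : ℝ => Real.exp (-x ^ 2 / 2)) (-x * Real.exp (-x ^ 2 / 2)) x := by
  have h1 : HasDerivAt (fun x : ℝ => -x ^ 2 / 2) (-x) x := by
    have := ((hasDerivAt_pow 2 x).neg).div_const 2
    exact this.congr_deriv (by ring)
  have := h1.exp
  convert this using 1
  ring

lemma V1 : ∫ x : ℝ, x * Real.exp (-x ^ 2 / 2) = 0 := by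
  have hd : ∀ x : ℝ, HasDerivAt (fun x : ℝ => -Real.exp (-x ^ 2 / 2))
      (x * Real.exp (-x ^ 2 / 2)) x := by
    intro x
    have := (hasDerivAt_E x).neg
    exact this.congr_deriv (by ring)
  have hint : Integrable (fun x : ℝ => x * Real.exp (-x ^ 2 / 2)) := by
    simpa using intW 1
  have htop : Tendsto (fun x : ℝ => -Real.exp (-x ^ 2 / 2)) atTop (nhds 0) := by
    have := (tendsto_top 0).neg
    simpa using this
  have hbot : Tendsto (fun x : ℝ => -Real.exp (-x ^ 2 / 2)) atBot (nhds 0) := by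
    have := (tendsto_bot 0).neg
    simpa using this
  have := MeasureTheory.integral_of_hasDerivAt_of_tendsto hd hint hbot htop
  simpa using this

lemma V2 : ∫ x : ℝ, x ^ 2 * Real.exp (-x ^ 2 / 2) = Real.sqrt (2 * π) := by
  have hd : ∀ x : ℝ, HasDerivAt (fun x : ℝ => -(x * Real.exp (-x ^ 2 / 2)))
      (x ^ 2 * Real.exp (-x ^ 2 / 2) - Real.exp (-x ^ 2 / 2)) x := by
    intro x
    have h1 := ((hasDerivAt_id x).mul (hasDerivAt_E x)).neg
    exact h1.congr_deriv (by simp only [id_eq]; ring)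
  have hint : Integrable (fun x : ℝ => x ^ 2 * Real.exp (-x ^ 2 / 2)
      - Real.exp (-x ^ 2 / 2)) := by
    have := (intW 2).sub (intW 0)
    simpa [Pi.sub_def] using this
  have htop : Tendsto (fun x : ℝ => -(x * Real.exp (-x ^ 2 / 2))) atTop (nhds 0) := by
    have := (tendsto_top 1).neg
    simpa using this
  have hbot : Tendsto (fun x : ℝ => -(x * Real.exp (-x ^ 2 / 2))) atBot (nhds 0) := by
    have := (tendsto_bot 1).neg
    simpa using this
  have h0 := MeasureTheory.integral_of_hasDerivAt_of_tendsto hd hint hbot htop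
  rw [sub_zero] at h0
  have hi0 : Integrable (fun x : ℝ => Real.exp (-x ^ 2 / 2)) := by simpa using intW 0
  rw [MeasureTheory.integral_sub (intW 2) hi0] at h0
  have hV0 := V0
  linarith

lemma V3Ioi : ∫ x in Ioi (0:ℝ), x ^ 3 * Real.exp (-x ^ 2 / 2) = 2 := by
  have hd : ∀ x ∈ Ici (0:ℝ), HasDerivAt (fun x : ℝ => -((x ^ 2 + 2) * Real.exp (-x ^ 2 / 2)))
      (x ^ 3 * Real.exp (-x ^ 2 / 2)) x := by
    intro x _
    have h1 := ((((hasDerivAt_pow 2 x).add_const 2).mul (hasDerivAt_E x))).neg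
    exact h1.congr_deriv (by ring)
  have hint : IntegrableOn (fun x : ℝ => x ^ 3 * Real.exp (-x ^ 2 / 2)) (Ioi 0) :=
    (intW 3).integrableOn
  have htop : Tendsto (fun x : ℝ => -((x ^ 2 + 2) * Real.exp (-x ^ 2 / 2))) atTop (nhds 0) := by
    have h1 := ((tendsto_top 2).add ((tendsto_top 0).const_mul 2)).neg
    simp only [add_zero, neg_zero, mul_zero] at h1
    refine h1.congr (fun x => ?_)
    ring
  have h := MeasureTheory.integral_Ioi_of_hasDerivAt_of_tendsto' hd hint htop
  rw [h]
  norm_num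

lemma V3 : ∫ x : ℝ, |x| ^ 3 * Real.exp (-x ^ 2 / 2) = 4 := by
  have h := integral_comp_abs (f := fun t : ℝ => t ^ 3 * Real.exp (-t ^ 2 / 2))
  have heq : ∀ x : ℝ, |x| ^ 3 * Real.exp (-|x| ^ 2 / 2) = |x| ^ 3 * Real.exp (-x ^ 2 / 2) := by
    intro x; rw [sq_abs]
  simp only [heq] at h
  rw [h, V3Ioi]
  norm_num

/-! Conversion between `gaussianReal 0 1` and `volume`. -/

lemma gauss_density :
    gaussianReal 0 1 = volume.withDensity
      (fun x => ENNReal.ofReal ((Real.sqrt (2 * π))⁻¹ * Real.exp (-x ^ 2 / 2))) := by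
  rw [gaussianReal_of_var_ne_zero 0 one_ne_zero]
  congr 1
  funext x
  rw [gaussianPDF_def, gaussianPDFReal_def]
  norm_num

lemma gauss_integrable_iff (g : ℝ → ℝ) :
    Integrable g (gaussianReal 0 1)
      ↔ Integrable (fun x => g x * Real.exp (-x ^ 2 / 2)) volume := by
  rw [gauss_density]
  rw [integrable_withDensity_iff (by fun_prop) (Filter.Eventually.of_forall fun x =>
    ENNReal.ofReal_lt_top)]
  have hpos : (0:ℝ) < (Real.sqrt (2 * π))⁻¹ := by positivity
  have heq : ∀ x : ℝ, g x * (ENNReal.ofReal ((Real.sqrt (2 * π))⁻¹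
      * Real.exp (-x ^ 2 / 2))).toReal
      = (Real.sqrt (2 * π))⁻¹ * (g x * Real.exp (-x ^ 2 / 2)) := by
    intro x
    rw [ENNReal.toReal_ofReal (by positivity)]
    ring
  simp only [heq]
  exact integrable_const_mul_iff (isUnit_iff_ne_zero.mpr (ne_of_gt hpos)) _

lemma gauss_integral (g : ℝ → ℝ) :
    ∫ w, g w ∂(gaussianReal 0 1)
      = (Real.sqrt (2 * π))⁻¹ * ∫ x, g x * Real.exp (-x ^ 2 / 2) := by
  rw [gauss_density]
  have hmeas : Measurable (fun x : ℝ =>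
      Real.toNNReal ((Real.sqrt (2 * π))⁻¹ * Real.exp (-x ^ 2 / 2))) := by fun_prop
  have hdens : (fun x : ℝ => ENNReal.ofReal ((Real.sqrt (2 * π))⁻¹ * Real.exp (-x ^ 2 / 2)))
      = fun x => ((Real.toNNReal ((Real.sqrt (2 * π))⁻¹ * Real.exp (-x ^ 2 / 2)) : ℝ≥0) : ℝ≥0∞) := by
    rfl
  rw [hdens, integral_withDensity_eq_integral_smul hmeas]
  rw [← integral_const_mul]
  congr 1
  funext x
  rw [NNReal.smul_def, Real.coe_toNNReal _ (by positivity), smul_eq_mul]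
  ring

lemma G1 : ∫ w, w ∂(gaussianReal 0 1) = 0 := by
  rw [gauss_integral (fun w => w)]
  rw [V1, mul_zero]

lemma G2 : ∫ w, (w:ℝ) ^ 2 ∂(gaussianReal 0 1) = 1 := by
  rw [gauss_integral (fun w => w ^ 2), V2]
  rw [inv_mul_cancel₀]
  positivity

lemma G3 : ∫ w, |w| ^ 3 ∂(gaussianReal 0 1) = (Real.sqrt (2 * π))⁻¹ * 4 := by
  rw [gauss_integral (fun w => |w| ^ 3), V3]

end GaussSmoothAux

open GaussSmoothAux

/-- Second-order Gaussian smoothing expansion: for `f` three times continuously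
differentiable with third derivative bounded by `M`, the Gaussian smoothing
`∫ f(z + a w) dγ(w)` equals `f(z) + (a²/2) f''(z)` up to an error controlled by the
third absolute moment of the standard Gaussian, namely `(√2 · M · |a|³)/(3√π)`. -/
theorem gaussian_smoothing_second_order
    (f : ℝ → ℝ) (hf : ContDiff ℝ 3 f)
    (M : ℝ) (hM : 0 ≤ M) (hf3 : ∀ t : ℝ, |iteratedDeriv 3 f t| ≤ M)
    (z a : ℝ) :
    Integrable (fun w => f (z + a * w)) (gaussianReal 0 1) ∧
    |(∫ w, f (z + a * w) ∂(gaussianReal 0 1)) - f z - (a ^ 2 / 2) * iteratedDeriv 2 f z|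
      ≤ (M * |a| ^ 3 / 6) * ∫ w, |w| ^ 3 ∂(gaussianReal 0 1) ∧
    (M * |a| ^ 3 / 6) * (∫ w, |w| ^ 3 ∂(gaussianReal 0 1)) =
      Real.sqrt 2 * M * |a| ^ 3 / (3 * Real.sqrt π) := by
  set γ := gaussianReal 0 1 with hγ
  set c1 : ℝ := deriv f z * a with hc1
  set c2 : ℝ := iteratedDeriv 2 f z * a ^ 2 / 2 with hc2
  set K : ℝ := M * |a| ^ 3 / 6 with hK
  set R : ℝ → ℝ := fun w => f (z + a * w) - f z - c1 * w - c2 * w ^ 2 with hR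
  have hRb : ∀ w, |R w| ≤ K * |w| ^ 3 := by
    intro w
    have h := taylor3 hf hf3 z (a * w)
    have e1 : f (z + a * w) - f z - deriv f z * (a * w)
        - iteratedDeriv 2 f z * (a * w) ^ 2 / 2 = R w := by
      simp only [hR, hc1, hc2]
      ring
    rw [e1] at h
    calc |R w| ≤ M * |a * w| ^ 3 / 6 := h
      _ = K * |w| ^ 3 := by rw [abs_mul, hK]; ring
  -- integrability
  have habs3γ : Integrable (fun w : ℝ => |w| ^ 3) γ :=
    (gauss_integrable_iff _).2 (intAbsW 3)
  have hpow : ∀ n : ℕ, Integrable (fun w : ℝ => w ^ n) γ := fun n =>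
    (gauss_integrable_iff _).2 (intW n)
  have hRcont : Continuous R := by
    simp only [hR]
    exact (((hf.continuous.comp (continuous_const.add
      (continuous_const.mul continuous_id))).sub continuous_const).sub
      (continuous_const.mul continuous_id)).sub (continuous_const.mul (continuous_pow 2))
  have hRint : Integrable R γ := by
    refine (habs3γ.const_mul K).mono' hRcont.aestronglyMeasurable ?_
    exact Filter.Eventually.of_forall fun w => by
      rw [Real.norm_eq_abs]; exact hRb w
  have hc1int : Integrable (fun w : ℝ => c1 * w) γ := by
    have := (hpow 1).const_mul c1
    simpa using this
  have hc2int : Integrable (fun w : ℝ => c2 * w ^ 2) γ := (hpow 2).const_mul c2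
  have hconst : Integrable (fun _ : ℝ => f z) γ := integrable_const _
  have hfun_eq : (fun w => f (z + a * w)) = fun w => R w + (f z + c1 * w + c2 * w ^ 2) := by
    funext w
    simp only [hR]
    ring
  have hint1 : Integrable (fun w : ℝ => f z + c1 * w + c2 * w ^ 2) γ :=
    (hconst.add hc1int).add hc2int
  have hfγ : Integrable (fun w => f (z + a * w)) γ := by
    rw [hfun_eq]
    exact hRint.add hint1
  refine ⟨hfγ, ?_, ?_⟩
  · -- second part
    have h1 : ∫ w, (f z + c1 * w + c2 * w ^ 2) ∂γ = f z + c2 := by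
      have hadd1 : Integrable (fun w : ℝ => f z + c1 * w) γ := hconst.add hc1int
      rw [integral_add hadd1 hc2int, integral_add hconst hc1int,
        integral_const, integral_const_mul, integral_const_mul]
      have hG1 : ∫ w, w ∂γ = 0 := G1
      have hG2 : ∫ w, (w:ℝ) ^ 2 ∂γ = 1 := G2
      rw [hG1, hG2]
      simp [measure_univ]
    have hsplit : ∫ w, f (z + a * w) ∂γ = (∫ w, R w ∂γ) + (f z + c2) := by
      rw [hfun_eq, integral_add hRint hint1, h1]
    have hdiff : (∫ w, f (z + a * w) ∂γ) - f z - (a ^ 2 / 2) * iteratedDeriv 2 f z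
        = ∫ w, R w ∂γ := by
      rw [hsplit, hc2]
      ring
    rw [hdiff]
    have h2 : |∫ w, R w ∂γ| ≤ ∫ w, |R w| ∂γ := by
      simpa [Real.norm_eq_abs] using
        MeasureTheory.norm_integral_le_integral_norm (f := R) (μ := γ)
    have h3 : ∫ w, |R w| ∂γ ≤ ∫ w, K * |w| ^ 3 ∂γ :=
      integral_mono hRint.abs (habs3γ.const_mul K) hRb
    have h4 : ∫ w, K * |w| ^ 3 ∂γ = K * ∫ w, |w| ^ 3 ∂γ := integral_const_mul _ _
    rw [h4] at h3
    exact h2.trans h3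
  · -- third part
    have hval : ∫ w, |w| ^ 3 ∂γ = (Real.sqrt (2 * π))⁻¹ * 4 := G3
    rw [hval]
    have hsqrt : Real.sqrt (2 * π) = Real.sqrt 2 * Real.sqrt π :=
      Real.sqrt_mul (by norm_num) _
    have hs2 : (0:ℝ) < Real.sqrt 2 := by positivity
    have hsπ : (0:ℝ) < Real.sqrt π := Real.sqrt_pos.mpr Real.pi_pos
    have hss : Real.sqrt 2 * Real.sqrt 2 = 2 := Real.mul_self_sqrt (by norm_num)
    have h2inv : (Real.sqrt 2)⁻¹ = Real.sqrt 2 / 2 := by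
      rw [eq_div_iff (two_ne_zero : (2:ℝ) ≠ 0), inv_mul_eq_div, div_eq_iff hs2.ne']
      exact hss.symm
    rw [hsqrt, hK, mul_inv, h2inv]
    field_simp
    ring
end

section
/- Fix integers N, m, H ≥ 1, a time step Δt > 0, a nonempty compact set 𝕌 ⊆ ℝᵐ, a continuous function r : ℝᵐ → ℝ, a vector ℓ ∈ ℝᴺ, and matrices Â, B̂₁, …, B̂ₘ ∈ ℝ^{N×N}. For a node-wise control assignment u : {1,…,N} → 𝕌, let M(u) := Â + Σ_{s=1}^{m} B̂_s · diag(u(1)_s, …, u(N)_s), and assume that M(u) has nonnegative entries for every such u. Define vectors v_H, …, v_0 ∈ ℝᴺ by the backward recursion v_H = 0 and v_k(i) = ℓ(i)Δt + (Âᵀ v_{k+1})(i) + min_{w ∈ 𝕌} [ r(w)Δt + Σ_{s=1}^{m} w_s (B̂_sᵀ v_{k+1})(i) ] for k = H−1, …, 0 and i = 1, …, N (these minima exist by compactness and continuity). Then for every z₀ ∈ ℝᴺ with nonnegative entries, v₀ᵀ z₀ is the minimum, over all control sequences u⁰, …, u^{H−1} : {1,…,N} → 𝕌, of Σ_{k=0}^{H−1}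 Σ_{i=1}^{N} z_k(i) · (ℓ(i) + r(uᵏ(i))) Δt, where z_{k+1} := M(uᵏ) z_k; in particular this minimum is attained. -/
open Matrix Finset

/-- Finite-dimensional dynamic programming identity underlying the discrete-time
Kernel HJB recursion: the backward value recursion computes the exact optimal value
`v₀ᵀ z₀` of the discretized measure-propagation optimal control problem, and the
minimum over control sequences is attained. -/
theorem kernel_hjb_dynamic_programming
    (N m H : ℕ) (hN : 1 ≤ N) (hm : 1 ≤ m) (hH : 1 ≤ H)
    (Δt : ℝ) (hΔt : 0 < Δt)
    (U : Set (Fin m → ℝ)) (hU_ne : U.Nonempty) (hU_cpt : IsCompact U)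
    (r : (Fin m → ℝ) → ℝ) (hr : Continuous r)
    (ℓ : Fin N → ℝ)
    (Ahat : Matrix (Fin N) (Fin N) ℝ) (Bhat : Fin m → Matrix (Fin N) (Fin N) ℝ)
    (hM_nonneg : ∀ u : Fin N → Fin m → ℝ, (∀ i, u i ∈ U) → ∀ i j,
      0 ≤ (Ahat + ∑ s : Fin m, Bhat s * Matrix.diagonal (fun i => u i s)) i j)
    (v : ℕ → Fin N → ℝ)
    (hvH : ∀ i, v H i = 0)
    (hvk : ∀ k, k < H → ∀ i,
      v k i = ℓ i * Δt + Ahatᵀ.mulVec (v (k + 1)) i +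
        sInf ((fun w : Fin m → ℝ =>
          r w * Δt + ∑ s : Fin m, w s * (Bhat s)ᵀ.mulVec (v (k + 1)) i) '' U))
    (z₀ : Fin N → ℝ) (hz₀ : ∀ i, 0 ≤ z₀ i) :
    IsLeast
      {c : ℝ | ∃ u : ℕ → Fin N → (Fin m → ℝ),
        (∀ k, ∀ i, u k i ∈ U) ∧
        ∃ z : ℕ → Fin N → ℝ, z 0 = z₀ ∧
          (∀ k, z (k + 1) =
            (Ahat + ∑ s : Fin m,
              Bhat s * Matrix.diagonal (fun i => u k i s)).mulVec (z k)) ∧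
          c = ∑ k ∈ Finset.range H, ∑ i : Fin N, z k i * (ℓ i + r (u k i)) * Δt}
      (v 0 ⬝ᵥ z₀) := by
  classical
  set Mmat : (Fin N → Fin m → ℝ) → Matrix (Fin N) (Fin N) ℝ :=
    fun u => Ahat + ∑ s : Fin m, Bhat s * Matrix.diagonal (fun i => u i s) with hMmat
  set g : ℕ → Fin N → (Fin m → ℝ) → ℝ :=
    fun k i w => r w * Δt + ∑ s : Fin m, w s * (Bhat s)ᵀ.mulVec (v (k+1)) i with hg
  have hg_cont : ∀ k i, Continuous (g k i) := by
    intro k i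
    exact (hr.mul continuous_const).add
      (continuous_finset_sum _ fun s _ => (continuous_apply s).mul continuous_const)
  have himg_ne : ∀ k i, (g k i '' U).Nonempty := fun k i => hU_ne.image _
  have hbdd : ∀ k i, BddBelow (g k i '' U) := fun k i =>
    (hU_cpt.image (hg_cont k i)).bddBelow
  have hsInf_le : ∀ k i w, w ∈ U → sInf (g k i '' U) ≤ g k i w :=
    fun k i w hw => csInf_le (hbdd k i) ⟨w, hw, rfl⟩
  have hmin : ∀ k i, ∃ w, w ∈ U ∧ ∀ w' ∈ U, g k i w ≤ g k i w' := by
    intro k i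
    obtain ⟨w, hw, hmn⟩ := hU_cpt.exists_isMinOn hU_ne (hg_cont k i).continuousOn
    exact ⟨w, hw, fun w' hw' => hmn hw'⟩
  set ustar : ℕ → Fin N → Fin m → ℝ := fun k i => (hmin k i).choose with hustar
  have hustar_mem : ∀ k i, ustar k i ∈ U := fun k i => (hmin k i).choose_spec.1
  have hustar_inf : ∀ k i, sInf (g k i '' U) = g k i (ustar k i) := by
    intro k i
    refine le_antisymm (hsInf_le k i _ (hustar_mem k i)) ?_
    refine le_csInf (himg_ne k i) ?_
    rintro x ⟨w, hw, rfl⟩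
    exact (hmin k i).choose_spec.2 w hw
  have hMT : ∀ (u : Fin N → Fin m → ℝ) (w : Fin N → ℝ) (i : Fin N),
      (Mmat u)ᵀ.mulVec w i
        = Ahatᵀ.mulVec w i + ∑ s : Fin m, u i s * (Bhat s)ᵀ.mulVec w i := by
    intro u w i
    simp only [hMmat, Matrix.mulVec, Matrix.transpose_apply, dotProduct,
      Matrix.add_apply, Matrix.sum_apply, Matrix.mul_diagonal]
    have h1 : ∀ j, (Ahat j i + ∑ s : Fin m, Bhat s j i * u i s) * w j
        = Ahat j i * w j + ∑ s : Fin m, u i s * (Bhat s j i * w j) := by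
      intro j
      rw [add_mul, Finset.sum_mul]
      congr 1
      exact Finset.sum_congr rfl fun s _ => by ring
    rw [Finset.sum_congr rfl fun j _ => h1 j, Finset.sum_add_distrib, Finset.sum_comm]
    congr 1
    exact Finset.sum_congr rfl fun s _ => (Finset.mul_sum _ _ _).symm
  have hdot : ∀ (u : Fin N → Fin m → ℝ) (w z : Fin N → ℝ),
      w ⬝ᵥ (Mmat u).mulVec z = ∑ i, z i * (Mmat u)ᵀ.mulVec w i := by
    intro u w z
    rw [Matrix.dotProduct_mulVec, ← Matrix.mulVec_transpose]
    simp [dotProduct, mul_comm]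
  have step : ∀ (u : Fin N → Fin m → ℝ), (∀ i, u i ∈ U) →
      ∀ (z : Fin N → ℝ), (∀ i, 0 ≤ z i) → ∀ k, k < H →
      v k ⬝ᵥ z ≤ (∑ i, z i * (ℓ i + r (u i)) * Δt) + v (k+1) ⬝ᵥ (Mmat u).mulVec z := by
    intro u hu z hz k hk
    rw [hdot]
    have lhs : v k ⬝ᵥ z
        = ∑ i, z i * (ℓ i * Δt + Ahatᵀ.mulVec (v (k+1)) i + sInf (g k i '' U)) := by
      simp only [dotProduct]
      refine Finset.sum_congr rfl fun i _ => ?_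
      rw [hvk k hk i]; ring
    rw [lhs, ← Finset.sum_add_distrib]
    refine Finset.sum_le_sum fun i _ => ?_
    rw [hMT]
    have h1 : sInf (g k i '' U) ≤ g k i (u i) := hsInf_le k i _ (hu i)
    calc z i * (ℓ i * Δt + Ahatᵀ.mulVec (v (k+1)) i + sInf (g k i '' U))
        ≤ z i * (ℓ i * Δt + Ahatᵀ.mulVec (v (k+1)) i + g k i (u i)) :=
          mul_le_mul_of_nonneg_left (by linarith) (hz i)
      _ = z i * (ℓ i + r (u i)) * Δt
          + z i * (Ahatᵀ.mulVec (v (k+1)) i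
            + ∑ s : Fin m, u i s * (Bhat s)ᵀ.mulVec (v (k+1)) i) := by
          simp only [hg]; ring
  have stepEq : ∀ (z : Fin N → ℝ) (k : ℕ), k < H →
      v k ⬝ᵥ z = (∑ i, z i * (ℓ i + r (ustar k i)) * Δt)
        + v (k+1) ⬝ᵥ (Mmat (ustar k)).mulVec z := by
    intro z k hk
    rw [hdot, ← Finset.sum_add_distrib]
    simp only [dotProduct]
    refine Finset.sum_congr rfl fun i _ => ?_
    rw [hMT, hvk k hk i, hustar_inf k i]
    simp only [hg]; ring
  have hz_nonneg : ∀ (u : ℕ → Fin N → Fin m → ℝ), (∀ k i, u k i ∈ U) →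
      ∀ (z : ℕ → Fin N → ℝ), z 0 = z₀ →
      (∀ k, z (k+1) = (Mmat (u k)).mulVec (z k)) → ∀ k i, 0 ≤ z k i := by
    intro u hu z h0 hrec k
    induction k with
    | zero => intro i; rw [h0]; exact hz₀ i
    | succ k ih =>
      intro i
      rw [hrec k]
      simp only [Matrix.mulVec, dotProduct]
      exact Finset.sum_nonneg fun j _ => mul_nonneg (hM_nonneg (u k) (hu k) i j) (ih j)
  have lower : ∀ (u : ℕ → Fin N → Fin m → ℝ), (∀ k i, u k i ∈ U) →
      ∀ (z : ℕ → Fin N → ℝ), z 0 = z₀ →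
      (∀ k, z (k+1) = (Mmat (u k)).mulVec (z k)) →
      ∀ n, n ≤ H →
      v (H - n) ⬝ᵥ z (H - n)
        ≤ ∑ k ∈ Finset.Ico (H - n) H, ∑ i, z k i * (ℓ i + r (u k i)) * Δt := by
    intro u hu z h0 hrec n
    induction n with
    | zero => intro _; simp [dotProduct, hvH]
    | succ n ih =>
      intro hn
      have hk : H - (n+1) < H := by omega
      have hk1 : H - (n+1) + 1 = H - n := by omega
      have hst := step (u (H - (n+1))) (hu _) (z (H - (n+1)))
        (fun i => hz_nonneg u hu z h0 hrec _ i) (H - (n+1)) hk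
      rw [← hrec (H - (n+1)), hk1] at hst
      calc v (H - (n+1)) ⬝ᵥ z (H - (n+1))
          ≤ (∑ i, z (H - (n+1)) i * (ℓ i + r (u (H - (n+1)) i)) * Δt)
            + v (H - n) ⬝ᵥ z (H - n) := hst
        _ ≤ (∑ i, z (H - (n+1)) i * (ℓ i + r (u (H - (n+1)) i)) * Δt)
            + ∑ k ∈ Finset.Ico (H - n) H, ∑ i, z k i * (ℓ i + r (u k i)) * Δt :=
            add_le_add le_rfl (ih (by omega))
        _ = ∑ k ∈ Finset.Ico (H - (n+1)) H, ∑ i, z k i * (ℓ i + r (u k i)) * Δt := by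
            rw [Finset.sum_eq_sum_Ico_succ_bot hk, hk1]
  set zstar : ℕ → Fin N → ℝ :=
    fun k => Nat.rec z₀ (fun k zk => (Mmat (ustar k)).mulVec zk) k with hzstar
  have hzs0 : zstar 0 = z₀ := rfl
  have hzsrec : ∀ k, zstar (k+1) = (Mmat (ustar k)).mulVec (zstar k) := fun k => rfl
  have upper : ∀ n, n ≤ H →
      v (H - n) ⬝ᵥ zstar (H - n)
        = ∑ k ∈ Finset.Ico (H - n) H, ∑ i, zstar k i * (ℓ i + r (ustar k i)) * Δt := by
    intro n
    induction n with
    | zero => intro _; simp [dotProduct, hvH]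
    | succ n ih =>
      intro hn
      have hk : H - (n+1) < H := by omega
      have hk1 : H - (n+1) + 1 = H - n := by omega
      have hst := stepEq (zstar (H - (n+1))) (H - (n+1)) hk
      rw [← hzsrec (H - (n+1)), hk1] at hst
      rw [hst, ih (by omega), Finset.sum_eq_sum_Ico_succ_bot hk, hk1]
  constructor
  · refine ⟨ustar, hustar_mem, zstar, hzs0, hzsrec, ?_⟩
    have := upper H le_rfl
    simp only [Nat.sub_self] at this
    rw [← Finset.range_eq_Ico] at this
    rw [← hzs0]
    exact this
  · rintro c ⟨u, hu, z, h0, hrec, rfl⟩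
    have := lower u hu z h0 hrec H le_rfl
    simp only [Nat.sub_self] at this
    rw [← Finset.range_eq_Ico] at this
    rw [← h0]
    exact this
end

section
/- For all x₁, x₂, u ∈ ℝ, (1/2)x₂² + (1/2)u² + x₁·x₂ + x₂·( −x₁ − (1/2)x₂(1 − x₁²) + x₁·u ) = (1/2)·(u + x₁x₂)². Consequently, with value function V(x₁,x₂) = (1/2)(x₁² + x₂²), for the controlled Van der Pol system ẋ₁ = x₂, ẋ₂ = −x₁ − (1/2)x₂(1 − x₁²) + x₁u with stage cost ℓ(x,u) = (1/2)(x₂² + u²), the stationary Hamilton–Jacobi–Bellman relation min_{u ∈ ℝ} [ ℓ(x,u) + ⟨∇V(x), (ẋ₁, ẋ₂)⟩ ] = 0 holds at every (x₁,x₂) ∈ ℝ², the minimum being attained at the unique point u = −x₁x₂. -/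
open RealInnerProductSpace

lemma grad_eq (x : EuclideanSpace ℝ (Fin 2)) :
    gradient (fun p : EuclideanSpace ℝ (Fin 2) => (1/2)*((p 0)^2+(p 1)^2)) x = x := by
  have key : (fun p : EuclideanSpace ℝ (Fin 2) => (1/2)*((p 0)^2+(p 1)^2))
      = fun p : EuclideanSpace ℝ (Fin 2) => (1/2) * ⟪p, p⟫ := by
    funext p
    simp [PiLp.inner_apply, Fin.sum_univ_two, sq, RCLike.inner_apply]
    rw [← pow_two ‖p‖, EuclideanSpace.norm_sq_eq]; simp [Fin.sum_univ_two, sq]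
    try ring
  have hinner : HasFDerivAt (fun p : EuclideanSpace ℝ (Fin 2) => ⟪p, p⟫)
      ((fderivInnerCLM ℝ (x, x)).comp ((ContinuousLinearMap.id ℝ _).prod (ContinuousLinearMap.id ℝ _))) x :=
    (hasFDerivAt_id x).inner ℝ (hasFDerivAt_id x)
  have h := hinner.const_mul (1/2 : ℝ)
  have hg : HasGradientAt (fun p : EuclideanSpace ℝ (Fin 2) => (1/2) * ⟪p, p⟫) x x := by
    rw [hasGradientAt_iff_hasFDerivAt]
    refine h.congr_fderiv ?_
    ext y
    simp [fderivInnerCLM, real_inner_comm]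
    ring
  rw [key]
  exact hg.gradient

lemma inner_eq (x : EuclideanSpace ℝ (Fin 2)) (a b : ℝ) :
    ⟪x, (WithLp.equiv 2 (Fin 2 → ℝ)).symm ![a, b]⟫ = x 0 * a + x 1 * b := by
  simp [PiLp.inner_apply, Fin.sum_univ_two, RCLike.inner_apply]
  ring

/-- Verification of the ground-truth optimal feedback law `π*(x) = −x₁x₂` for the
controlled Van der Pol system `ẋ₁ = x₂`, `ẋ₂ = −x₁ − (1/2)x₂(1 − x₁²) + x₁u` with
stage cost `ℓ(x,u) = (1/2)(x₂² + u²)` and value function `V(x) = (1/2)(x₁² + x₂²)`: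
the completed-square identity holds, hence the stationary HJB relation
`min_u [ℓ(x,u) + ⟨∇V(x), (ẋ₁, ẋ₂)⟩] = 0` holds with unique minimizer `u = −x₁x₂`. -/
theorem vanderpol_hjb :
    (∀ x₁ x₂ u : ℝ,
      (1 / 2) * x₂ ^ 2 + (1 / 2) * u ^ 2 + x₁ * x₂ +
          x₂ * (-x₁ - (1 / 2) * x₂ * (1 - x₁ ^ 2) + x₁ * u) =
        (1 / 2) * (u + x₁ * x₂) ^ 2) ∧
    ∀ x : EuclideanSpace ℝ (Fin 2),
      IsLeast {y : ℝ | ∃ u : ℝ,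
        y = (1 / 2) * ((x 1) ^ 2 + u ^ 2) +
          ⟪gradient
              (fun p : EuclideanSpace ℝ (Fin 2) => (1 / 2) * ((p 0) ^ 2 + (p 1) ^ 2)) x,
            (WithLp.equiv 2 (Fin 2 → ℝ)).symm
              ![x 1, -(x 0) - (1 / 2) * (x 1) * (1 - (x 0) ^ 2) + (x 0) * u]⟫} 0 ∧
      ∀ u : ℝ,
        ((1 / 2) * ((x 1) ^ 2 + u ^ 2) +
            ⟪gradient
                (fun p : EuclideanSpace ℝ (Fin 2) => (1 / 2) * ((p 0) ^ 2 + (p 1) ^ 2)) x,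
              (WithLp.equiv 2 (Fin 2 → ℝ)).symm
                ![x 1, -(x 0) - (1 / 2) * (x 1) * (1 - (x 0) ^ 2) + (x 0) * u]⟫ = 0 ↔
          u = -(x 0 * x 1)) := by
  have hval : ∀ (x : EuclideanSpace ℝ (Fin 2)) (u : ℝ),
      (1 / 2) * ((x 1) ^ 2 + u ^ 2) +
        ⟪gradient
            (fun p : EuclideanSpace ℝ (Fin 2) => (1 / 2) * ((p 0) ^ 2 + (p 1) ^ 2)) x,
          (WithLp.equiv 2 (Fin 2 → ℝ)).symm
            ![x 1, -(x 0) - (1 / 2) * (x 1) * (1 - (x 0) ^ 2) + (x 0) * u]⟫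
        = (1 / 2) * (u + x 0 * x 1) ^ 2 := by
    intro x u
    rw [grad_eq, inner_eq]
    ring
  refine ⟨fun x₁ x₂ u => by ring, fun x => ⟨⟨⟨-(x 0 * x 1), ?_⟩, ?_⟩, fun u => ?_⟩⟩
  · rw [hval]; ring
  · rintro y ⟨u, rfl⟩
    rw [hval]
    positivity
  · rw [hval]
    constructor
    · intro h
      have : (u + x 0 * x 1) ^ 2 = 0 := by linarith
      have := pow_eq_zero_iff (n := 2) (by norm_num) |>.mp this
      linarith
    · rintro rfl; ring
end
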